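/- Let G be a graph of order p with at least one edge and let m ≥ 1. Then the m-duplicate graph Dᵐ(G) and the 2ᵐ-shadow graph D_{2ᵐ}(G) both have 2ᵐp vertices, have equal energies (namely 2ᵐ·ε(G)), and are non-cospectral. -/

import Mathlib

open Matrix SimpleGraph Finset

variable {V W : Type*}

/-- The adjacency matrix of a simple graph over ℝ is Hermitian. -/
lemma adjMatrix_isHermitian [Fintype V] [DecidableEq V] (G : SimpleGraph V)
    [DecidableRel G.Adj] : (G.adjMatrix ℝ).IsHermitian := by
  rw [Matrix.IsHermitian, Matrix.conjTranspose_eq_transpose_of_trivial]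
  exact G.isSymm_adjMatrix

/-- The energy of a finite simple graph: the sum of the absolute values of the
eigenvalues of its real adjacency matrix. -/
noncomputable def graphEnergy [Fintype V] [DecidableEq V] (G : SimpleGraph V) : ℝ := by
  classical
  exact ∑ i, |(adjMatrix_isHermitian G).eigenvalues i|

/-- The spectrum of a finite simple graph: the multiset of eigenvalues (with
multiplicity) of its real adjacency matrix. -/
noncomputable def graphSpectrum [Fintype V] [DecidableEq V] (G : SimpleGraph V) : Multiset ℝ := by
  classical
  exact Finset.univ.val.map (adjMatrix_isHermitian G).eigenvalues

/-- A graph is integral if every eigenvalue of its adjacency matrix is an integer. -/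
def IsIntegralGraph [Fintype V] [DecidableEq V] (G : SimpleGraph V) : Prop :=
  ∀ x ∈ graphSpectrum G, ∃ k : ℤ, x = (k : ℝ)

/-- The m-shadow graph of `G`, on vertex set `Fin m × V`: `(i,u)` and `(j,v)` are
adjacent iff `u` and `v` are adjacent in `G`. -/
def shadowGraph (m : ℕ) (G : SimpleGraph V) : SimpleGraph (Fin m × V) where
  Adj x y := G.Adj x.2 y.2
  symm := ⟨fun _ _ h => h.symm⟩
  loopless := ⟨fun _ h => G.irrefl h⟩

/-- The duplicate graph of `G`, on vertex set `V ⊕ V`: `inl a` is adjacent to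
`inr b` iff `a` and `b` are adjacent in `G`; no other adjacencies. -/
def duplicateGraph (G : SimpleGraph V) : SimpleGraph (V ⊕ V) where
  Adj x y :=
    match x, y with
    | Sum.inl a, Sum.inr b => G.Adj a b
    | Sum.inr a, Sum.inl b => G.Adj a b
    | _, _ => False
  symm := ⟨by rintro (a | a) (b | b) h <;> first | exact h.symm | exact h.elim⟩
  loopless := ⟨by rintro (a | a) h <;> exact h⟩

/-- The Kronecker (tensor) product of two simple graphs. -/
def tensorGraph (G : SimpleGraph V) (H : SimpleGraph W) : SimpleGraph (V × W) where
  Adj x y := G.Adj x.1 y.1 ∧ H.Adj x.2 y.2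
  symm := ⟨fun _ _ h => ⟨h.1.symm, h.2.symm⟩⟩
  loopless := ⟨fun _ h => G.irrefl h.1⟩

/-- The m-splitting graph of `G`, on vertex set `V ⊕ (Fin m × V)`: original
vertices keep their adjacencies, an original vertex `u` is adjacent to a copy
`(i,v)` iff `u` is adjacent to `v` in `G`, and copies are pairwise non-adjacent. -/
def splittingGraph (m : ℕ) (G : SimpleGraph V) : SimpleGraph (V ⊕ (Fin m × V)) where
  Adj x y :=
    match x, y with
    | Sum.inl u, Sum.inl v => G.Adj u v
    | Sum.inl u, Sum.inr iv => G.Adj u iv.2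
    | Sum.inr iu, Sum.inl v => G.Adj iu.2 v
    | Sum.inr _, Sum.inr _ => False
  symm := ⟨by rintro (u | iu) (v | iv) h <;> first | exact h.symm | exact h.elim⟩
  loopless := ⟨by rintro (u | iu) h <;> first | exact G.irrefl h | exact h⟩

/-- The join of two simple graphs: their disjoint union together with all edges
between the two parts. -/
def joinGraph (G : SimpleGraph V) (H : SimpleGraph W) : SimpleGraph (V ⊕ W) where
  Adj x y :=
    match x, y with
    | Sum.inl a, Sum.inl b => G.Adj a b
    | Sum.inr a, Sum.inr b => H.Adj a b
    | _, _ => True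
  symm := ⟨by rintro (a | a) (b | b) h <;> first | exact h.symm | trivial⟩
  loopless := ⟨by rintro (a | a) h <;> first | exact G.irrefl h | exact H.irrefl h⟩

/-- The superpath graph on a sequence of part sizes: independent sets `W i` of
size `a i`, where vertices in parts `i` and `j` are adjacent iff `|i - j| = 1`. -/
def superpathGraph {t : ℕ} (a : Fin t → ℕ) : SimpleGraph (Σ i : Fin t, Fin (a i)) where
  Adj x y := (x.1 : ℕ) + 1 = (y.1 : ℕ) ∨ (y.1 : ℕ) + 1 = (x.1 : ℕ)
  symm := ⟨fun _ _ h => h.symm⟩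
  loopless := ⟨fun x (h : (x.1 : ℕ) + 1 = (x.1 : ℕ) ∨ (x.1 : ℕ) + 1 = (x.1 : ℕ)) => by omega⟩

/-- The vertex type of the m-fold duplicate graph. -/
def iterDupVertex (V : Type*) (m : ℕ) : Type _ :=
  Nat.rec V (fun _ T => T ⊕ T) m

instance instFintypeIterDupVertex {V : Type*} [Fintype V] : ∀ m, Fintype (iterDupVertex V m)
  | 0 => inferInstanceAs (Fintype V)
  | m + 1 =>
    letI := instFintypeIterDupVertex (V := V) m
    inferInstanceAs (Fintype (iterDupVertex V m ⊕ iterDupVertex V m))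

instance instDecidableEqIterDupVertex {V : Type*} [DecidableEq V] :
    ∀ m, DecidableEq (iterDupVertex V m)
  | 0 => inferInstanceAs (DecidableEq V)
  | m + 1 =>
    letI := instDecidableEqIterDupVertex (V := V) m
    inferInstanceAs (DecidableEq (iterDupVertex V m ⊕ iterDupVertex V m))

/-- The m-duplicate graph: `D⁰(G) = G` and `Dᵐ⁺¹(G) = D(Dᵐ(G))`. -/
def iterDup (G : SimpleGraph V) : ∀ m, SimpleGraph (iterDupVertex V m)
  | 0 => G
  | m + 1 => duplicateGraph (iterDup G m)


section AuxMatrix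
open Polynomial

variable {n : Type*} [Fintype n] [DecidableEq n] {R : Type*} [CommRing R]

lemma charpoly_conj_aux (M B N : Matrix n n R) (h1 : M * N = 1) :
    (M * B * N).charpoly = B.charpoly := by
  have hsc : C.mapMatrix M * Matrix.scalar n (X : R[X]) * C.mapMatrix N
      = Matrix.scalar n (X : R[X]) := by
    rw [scalar_apply, ← Matrix.smul_one_eq_diagonal, Matrix.mul_smul, Matrix.mul_one,
      Matrix.smul_mul, ← RingHom.map_mul, h1, RingHom.map_one]
  have key : charmatrix (M * B * N) =
      C.mapMatrix M * charmatrix B * C.mapMatrix N := by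
    simp only [charmatrix, sub_mul, mul_sub, RingHom.map_mul, hsc]
  have hdet : (C.mapMatrix M).det * (C.mapMatrix N).det = 1 := by
    rw [← det_mul, ← RingHom.map_mul, h1, RingHom.map_one, det_one]
  rw [Matrix.charpoly, key, det_mul, det_mul, Matrix.charpoly]
  calc (C.mapMatrix M).det * (charmatrix B).det * (C.mapMatrix N).det
      = (C.mapMatrix M).det * (C.mapMatrix N).det * (charmatrix B).det := by ring
    _ = (charmatrix B).det := by rw [hdet, one_mul]

lemma charpoly_diagonal' (d : n → R) :
    (diagonal d).charpoly = ∏ i, (X - C (d i)) := by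
  have : charmatrix (diagonal d) = diagonal fun i => X - C (d i) := by
    ext i j
    by_cases h : i = j
    · subst h; simp [charmatrix_apply_eq]
    · simp [charmatrix_apply_ne _ _ _ h, diagonal_apply_ne _ h, diagonal_apply_ne' _ h]
  rw [Matrix.charpoly, this, det_diagonal]

lemma charpoly_smul_hermitian (A : Matrix n n ℝ) (hA : A.IsHermitian) (c : ℝ) :
    (c • A).charpoly = ∏ i, (X - C (c * hA.eigenvalues i)) := by
  have hU1 : (hA.eigenvectorUnitary : Matrix n n ℝ) * (star hA.eigenvectorUnitary : Matrix n n ℝ)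
      = 1 := Unitary.coe_mul_star_self _
  have hsp := hA.spectral_theorem
  have : c • A = (hA.eigenvectorUnitary : Matrix n n ℝ) *
      diagonal (fun i => c * hA.eigenvalues i) * (star hA.eigenvectorUnitary : Matrix n n ℝ) := by
    conv_lhs => rw [hsp, Unitary.conjStarAlgAut_apply]
    rw [← Matrix.smul_mul, ← Matrix.mul_smul, ← diagonal_smul]
    congr 2
  rw [this, charpoly_conj_aux _ _ _ hU1, charpoly_diagonal']

lemma roots_prod_X_sub_C' (f : n → ℝ) :
    (∏ i, (X - C (f i))).roots = Finset.univ.val.map f := by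
  rw [Finset.prod_eq_multiset_prod,
    show (fun i => X - C (f i)) = ((fun a => X - C a) ∘ f) from rfl,
    ← Multiset.map_map, Polynomial.roots_multiset_prod_X_sub_C]

lemma roots_charpoly_hermitian (A : Matrix n n ℝ) (hA : A.IsHermitian) :
    A.charpoly.roots = Finset.univ.val.map hA.eigenvalues := by
  have h := charpoly_smul_hermitian A hA 1
  rw [one_smul] at h
  rw [h]
  simp only [one_mul]
  exact roots_prod_X_sub_C' _

lemma roots_charpoly_smul (A : Matrix n n ℝ) (hA : A.IsHermitian) (c : ℝ) :
    (c • A).charpoly.roots = A.charpoly.roots.map (fun x => c * x) := by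
  rw [charpoly_smul_hermitian A hA c, roots_prod_X_sub_C', roots_charpoly_hermitian A hA,
    Multiset.map_map]
  rfl

lemma charpoly_zero' : (0 : Matrix n n R).charpoly = X ^ Fintype.card n := by
  rw [← Matrix.diagonal_zero, charpoly_diagonal']
  simp [Finset.card_univ]

lemma charpoly_fromBlocks_symm (B C' : Matrix n n ℝ) :
    (Matrix.fromBlocks B C' C' B).charpoly = (B + C').charpoly * (B - C').charpoly := by
  set P : Matrix (n ⊕ n) (n ⊕ n) ℝ := Matrix.fromBlocks 1 1 1 (-1) with hP
  set Q : Matrix (n ⊕ n) (n ⊕ n) ℝ := (1/2 : ℝ) • P with hQ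
  have hPP : P * P = (2 : ℝ) • 1 := by
    rw [hP, Matrix.fromBlocks_multiply,
      show ((1 : Matrix (n ⊕ n) (n ⊕ n) ℝ)) = Matrix.fromBlocks 1 0 0 1 from
        (Matrix.fromBlocks_one).symm,
      Matrix.fromBlocks_smul]
    refine Matrix.fromBlocks_inj.mpr ⟨?_, ?_, ?_, ?_⟩
    · rw [Matrix.mul_one]; module
    · rw [Matrix.mul_one, Matrix.mul_neg, Matrix.mul_one]; module
    · rw [Matrix.mul_one, Matrix.neg_mul, Matrix.one_mul]; module
    · rw [Matrix.mul_one, neg_mul_neg, Matrix.one_mul]; module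
  have h1 : P * Q = 1 := by
    rw [hQ, Matrix.mul_smul, hPP, smul_smul]
    norm_num
  have key : Matrix.fromBlocks B C' C' B = P * (Matrix.fromBlocks (B + C') 0 0 (B - C')) * Q := by
    rw [hQ, Matrix.mul_smul, hP, Matrix.fromBlocks_multiply, Matrix.fromBlocks_multiply,
      Matrix.fromBlocks_smul]
    refine Matrix.fromBlocks_inj.mpr ⟨?_, ?_, ?_, ?_⟩ <;>
      · simp only [Matrix.one_mul, Matrix.neg_mul, Matrix.mul_one, Matrix.mul_neg,
          Matrix.mul_zero, Matrix.zero_mul, neg_mul_neg, add_zero, zero_add]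
        module
  rw [key, charpoly_conj_aux _ _ _ h1, Matrix.charpoly_fromBlocks_zero₂₁]

end AuxMatrix

section AuxGraph
open Polynomial

variable {W : Type*} [Fintype W] [DecidableEq W]

lemma graphSpectrum_def (H : SimpleGraph W) [DecidableRel H.Adj] :
    graphSpectrum H = (H.adjMatrix ℝ).charpoly.roots := by
  unfold graphSpectrum
  rw [roots_charpoly_hermitian _ (adjMatrix_isHermitian H)]
  congr!

lemma graphEnergy_def (H : SimpleGraph W) :
    graphEnergy H = ((graphSpectrum H).map (fun x => |x|)).sum := by
  unfold graphEnergy graphSpectrum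
  rw [Multiset.map_map]
  rfl

lemma adjMatrix_dup (H : SimpleGraph W) [DecidableRel H.Adj]
    [DecidableRel (duplicateGraph H).Adj] :
    (duplicateGraph H).adjMatrix ℝ =
      Matrix.fromBlocks 0 (H.adjMatrix ℝ) (H.adjMatrix ℝ) 0 := by
  ext i j
  rcases i with a | a <;> rcases j with b | b <;>
    simp [duplicateGraph, Matrix.fromBlocks, SimpleGraph.adjMatrix] <;> congr

lemma graphSpectrum_dup (H : SimpleGraph W) :
    graphSpectrum (duplicateGraph H) = graphSpectrum H + (graphSpectrum H).map (fun x => -x) := by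
  classical
  rw [graphSpectrum_def, graphSpectrum_def, adjMatrix_dup H, charpoly_fromBlocks_symm,
    Polynomial.roots_mul (mul_ne_zero (Matrix.charpoly_monic _).ne_zero
      (Matrix.charpoly_monic _).ne_zero)]
  rw [zero_add, zero_sub]
  congr 1
  rw [show -(H.adjMatrix ℝ) = (-1 : ℝ) • (H.adjMatrix ℝ) by rw [neg_one_smul],
    roots_charpoly_smul _ (adjMatrix_isHermitian H)]
  simp

/-- The doubling graph: two copies of `W` with adjacency given by projection. -/
def doubleGraph (H : SimpleGraph W) : SimpleGraph (W ⊕ W) where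
  Adj x y := H.Adj (Sum.elim id id x) (Sum.elim id id y)
  symm := ⟨fun _ _ h => h.symm⟩
  loopless := ⟨fun x => by cases x <;> exact fun h => H.irrefl h⟩

lemma adjMatrix_double (H : SimpleGraph W) [DecidableRel H.Adj]
    [DecidableRel (doubleGraph H).Adj] :
    (doubleGraph H).adjMatrix ℝ =
      Matrix.fromBlocks (H.adjMatrix ℝ) (H.adjMatrix ℝ) (H.adjMatrix ℝ) (H.adjMatrix ℝ) := by
  ext i j
  rcases i with a | a <;> rcases j with b | b <;>
    simp [doubleGraph, Matrix.fromBlocks, SimpleGraph.adjMatrix] <;> congr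

lemma graphSpectrum_double (H : SimpleGraph W) :
    graphSpectrum (doubleGraph H) =
      (graphSpectrum H).map (fun x => 2 * x) + Multiset.replicate (Fintype.card W) 0 := by
  classical
  rw [graphSpectrum_def, graphSpectrum_def, adjMatrix_double H, charpoly_fromBlocks_symm,
    sub_self, show H.adjMatrix ℝ + H.adjMatrix ℝ = (2 : ℝ) • H.adjMatrix ℝ from
      (two_smul ℝ _).symm, charpoly_zero',
    Polynomial.roots_mul (mul_ne_zero (Matrix.charpoly_monic _).ne_zero
      (pow_ne_zero _ Polynomial.X_ne_zero)),
    roots_charpoly_smul _ (adjMatrix_isHermitian H), Polynomial.roots_X_pow,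
    Multiset.nsmul_singleton]

lemma graphSpectrum_iso {V : Type*} [Fintype V] [DecidableEq V]
    (G : SimpleGraph V) (H : SimpleGraph W) (e : V ≃ W)
    (h : ∀ u v, G.Adj u v ↔ H.Adj (e u) (e v)) :
    graphSpectrum G = graphSpectrum H := by
  classical
  have hm : Matrix.reindex e e (G.adjMatrix ℝ) = H.adjMatrix ℝ := by
    ext i j
    simp only [Matrix.reindex_apply, Matrix.submatrix_apply, SimpleGraph.adjMatrix_apply]
    simp only [h (e.symm i) (e.symm j), e.apply_symm_apply]
  rw [graphSpectrum_def, graphSpectrum_def, ← Matrix.charpoly_reindex e (G.adjMatrix ℝ), hm]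

end AuxGraph

lemma spectrum_sq_sum_pos {W : Type*} [Fintype W] [DecidableEq W] (H : SimpleGraph W) (h : ∃ u v, H.Adj u v) :
    0 < ((graphSpectrum H).map (fun x => x ^ 2)).sum := by
  classical
  obtain ⟨u, v, huv⟩ := h
  have hA : H.adjMatrix ℝ ≠ 0 := by
    intro h0
    have h1 : (H.adjMatrix ℝ) u v = 1 := by simp [huv]
    rw [h0] at h1
    simpa using h1
  have hH := adjMatrix_isHermitian H
  have hmu : hH.eigenvalues ≠ 0 := by
    intro h0
    apply hA
    have hsp := hH.spectral_theorem
    rwa [h0, Pi.comp_zero, RCLike.ofReal_zero,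
      (by rfl : Function.const W (0 : ℝ) = fun _ => 0), Matrix.diagonal_zero, Unitary.conjStarAlgAut_apply, Matrix.mul_zero,
      Matrix.zero_mul] at hsp
  obtain ⟨i, hi⟩ := Function.ne_iff.mp hmu
  have hsum : ((graphSpectrum H).map (fun x => x ^ 2)).sum = ∑ j, (hH.eigenvalues j) ^ 2 := by
    rw [graphSpectrum_def, roots_charpoly_hermitian _ hH, Multiset.map_map]
    rfl
  rw [hsum]
  have hi' : hH.eigenvalues i ≠ 0 := by simpa using hi
  refine Finset.sum_pos' (fun j _ => sq_nonneg _)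
    ⟨i, Finset.mem_univ i, by
      have := abs_pos.mpr hi'
      nlinarith [sq_abs (hH.eigenvalues i)]⟩

theorem iterDup_shadow_equienergetic_noncospectral' [Fintype V] [DecidableEq V]
    (G : SimpleGraph V) (p m : ℕ) (hp : Fintype.card V = p)
    (hedge : ∃ u v, G.Adj u v) (hm : 1 ≤ m) :
    Fintype.card (iterDupVertex V m) = 2 ^ m * p ∧
      Fintype.card (Fin (2 ^ m) × V) = 2 ^ m * p ∧
      graphEnergy (iterDup G m) = 2 ^ m * graphEnergy G ∧
      graphEnergy (shadowGraph (2 ^ m) G) = 2 ^ m * graphEnergy G ∧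
      graphSpectrum (iterDup G m) ≠ graphSpectrum (shadowGraph (2 ^ m) G) := by
  classical
  -- cardinalities
  have hcard : ∀ k, Fintype.card (iterDupVertex V k) = 2 ^ k * p := by
    intro k
    induction k with
    | zero => rw [pow_zero, one_mul]; exact hp
    | succ k ih =>
      have h1 : Fintype.card (iterDupVertex V (k + 1)) =
          Fintype.card (iterDupVertex V k ⊕ iterDupVertex V k) := rfl
      rw [h1, Fintype.card_sum, ih, pow_succ]
      ring
  -- the key invariance of sums over the duplicate spectrum
  have key : ∀ (f : ℝ → ℝ), (∀ x, f (-x) = f x) → ∀ k,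
      ((graphSpectrum (iterDup G k)).map f).sum = 2 ^ k * ((graphSpectrum G).map f).sum := by
    intro f hf k
    induction k with
    | zero => simp [iterDup]; rfl
    | succ k ih =>
      have h1 : graphSpectrum (iterDup G (k + 1)) =
          graphSpectrum (duplicateGraph (iterDup G k)) := rfl
      rw [h1, graphSpectrum_dup, Multiset.map_add, Multiset.sum_add, Multiset.map_map]
      have h2 : (f ∘ fun x => -x) = f := funext hf
      rw [h2, ih, pow_succ]
      ring
  -- shadow spectrum
  have hshadow : ∀ k, graphSpectrum (shadowGraph (2 ^ k) G) =
      (graphSpectrum G).map (fun x => ((2 : ℝ) ^ k) * x) +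
        Multiset.replicate ((2 ^ k - 1) * p) 0 := by
    intro k
    induction k with
    | zero =>
      haveI : Unique (Fin (2 ^ 0)) := inferInstanceAs (Unique (Fin 1))
      have hiso : graphSpectrum G = graphSpectrum (shadowGraph (2 ^ 0) G) := by
        refine graphSpectrum_iso G (shadowGraph (2 ^ 0) G)
          (Equiv.uniqueProd V (Fin (2 ^ 0))).symm (fun u v => ?_)
        simp [shadowGraph, Equiv.uniqueProd_symm_apply]
      rw [← hiso]
      simp
    | succ k ih =>
      have hpow : (2 : ℕ) ^ (k + 1) = 2 ^ k + 2 ^ k := by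
        rw [pow_succ]; ring
      set e : Fin (2 ^ (k + 1)) × V ≃ (Fin (2 ^ k) × V) ⊕ (Fin (2 ^ k) × V) :=
        ((finCongr hpow).prodCongr (Equiv.refl V)).trans
          (((finSumFinEquiv.symm).prodCongr (Equiv.refl V)).trans
            (Equiv.sumProdDistrib _ _ _)) with he
      have haux : ∀ x : Fin (2 ^ (k + 1)) × V, (Sum.elim id id (e x)).2 = x.2 := by
        rintro ⟨i, w⟩
        rw [he]
        simp only [Equiv.trans_apply, Equiv.prodCongr_apply, Equiv.coe_refl, Prod.map_apply,
          id_eq]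
        cases hsum : finSumFinEquiv.symm (finCongr hpow i) with
        | inl a => simp
        | inr a => simp
      have hiso : graphSpectrum (shadowGraph (2 ^ (k + 1)) G) =
          graphSpectrum (doubleGraph (shadowGraph (2 ^ k) G)) := by
        refine graphSpectrum_iso _ _ e (fun u v => ?_)
        show G.Adj u.2 v.2 ↔ G.Adj (Sum.elim id id (e u)).2 (Sum.elim id id (e v)).2
        rw [haux u, haux v]
      rw [hiso, graphSpectrum_double, ih, Multiset.map_add, Multiset.map_map,
        Multiset.map_replicate]
      have hcomp : ((fun x => 2 * x) ∘ fun x => ((2 : ℝ) ^ k) * x) =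
          fun x => ((2 : ℝ) ^ (k + 1)) * x := by
        funext x
        simp [pow_succ]
        ring
      have hcards : Fintype.card (Fin (2 ^ k) × V) = 2 ^ k * p := by
        simp [hp]
      have hnat : (2 ^ k - 1) * p + 2 ^ k * p = (2 ^ (k + 1) - 1) * p := by
        obtain ⟨b, hb⟩ : ∃ b, 2 ^ k = b + 1 :=
          ⟨2 ^ k - 1, by have := Nat.one_le_two_pow (n := k); omega⟩
        rw [hpow, hb, Nat.add_sub_cancel]
        have hb2 : b + 1 + (b + 1) - 1 = b + (b + 1) := by omega
        rw [hb2]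
        ring
      rw [hcomp, hcards, mul_zero, add_assoc, ← Multiset.replicate_add, hnat]
  -- energy of the iterated duplicate
  have hE1 : graphEnergy (iterDup G m) = 2 ^ m * graphEnergy G := by
    rw [graphEnergy_def, graphEnergy_def, key (fun x => |x|) (fun x => abs_neg x) m]
  -- energy of the shadow
  have h2pos : (0 : ℝ) < 2 ^ m := by positivity
  have hE2 : graphEnergy (shadowGraph (2 ^ m) G) = 2 ^ m * graphEnergy G := by
    rw [graphEnergy_def, hshadow m, Multiset.map_add, Multiset.sum_add, Multiset.map_map,
      Multiset.map_replicate, abs_zero, Multiset.sum_replicate, smul_zero, add_zero,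
      graphEnergy_def]
    have : ((fun x => |x|) ∘ fun x => ((2 : ℝ) ^ m) * x) = fun x => (2 : ℝ) ^ m * |x| := by
      funext x
      simp [abs_mul, abs_of_pos h2pos]
    rw [this, Multiset.sum_map_mul_left]
  refine ⟨hcard m, by simp [hp], hE1, hE2, ?_⟩
  -- non-cospectral
  intro heq
  have hT : 0 < ((graphSpectrum G).map (fun x => x ^ 2)).sum := spectrum_sq_sum_pos G hedge
  set T := ((graphSpectrum G).map (fun x => x ^ 2)).sum with hTdef
  have hL : ((graphSpectrum (iterDup G m)).map (fun x => x ^ 2)).sum = 2 ^ m * T :=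
    key (fun x => x ^ 2) (fun x => by ring) m
  have hR : ((graphSpectrum (shadowGraph (2 ^ m) G)).map (fun x => x ^ 2)).sum =
      ((2 : ℝ) ^ m) ^ 2 * T := by
    rw [hshadow m, Multiset.map_add, Multiset.sum_add, Multiset.map_map, Multiset.map_replicate]
    have : ((fun x => x ^ 2) ∘ fun x => ((2 : ℝ) ^ m) * x) =
        fun x => ((2 : ℝ) ^ m) ^ 2 * x ^ 2 := by
      funext x
      show ((2 : ℝ) ^ m * x) ^ 2 = ((2 : ℝ) ^ m) ^ 2 * x ^ 2
      ring
    rw [this, Multiset.sum_map_mul_left]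
    simp
    rfl
  rw [heq, hR] at hL
  have hgt : (2 : ℝ) ^ m < ((2 : ℝ) ^ m) ^ 2 := by
    have h1 : (1 : ℝ) < 2 ^ m := by
      apply one_lt_pow₀ (by norm_num : (1:ℝ) < 2) (by omega : m ≠ 0)
    nlinarith
  nlinarith

/-- If `G` is a graph of order `p` with at least one edge and `m ≥ 1`, then the
m-duplicate graph `Dᵐ(G)` and the `2^m`-shadow graph `D_{2^m}(G)` both have
`2^m * p` vertices, their energies are both equal to `2^m · ε(G)`, and they are
non-cospectral. -/
theorem iterDup_shadow_equienergetic_noncospectral [Fintype V] [DecidableEq V]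
    (G : SimpleGraph V) (p m : ℕ) (hp : Fintype.card V = p)
    (hedge : ∃ u v, G.Adj u v) (hm : 1 ≤ m) :
    Fintype.card (iterDupVertex V m) = 2 ^ m * p ∧
      Fintype.card (Fin (2 ^ m) × V) = 2 ^ m * p ∧
      graphEnergy (iterDup G m) = 2 ^ m * graphEnergy G ∧
      graphEnergy (shadowGraph (2 ^ m) G) = 2 ^ m * graphEnergy G ∧
      graphSpectrum (iterDup G m) ≠ graphSpectrum (shadowGraph (2 ^ m) G) := by
  exact iterDup_shadow_equienergetic_noncospectral' G p m hp hedge hm
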